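/- arXiv:1903.07797 — 3 statements merged into one kernel-verified Lean document; each statement's English description precedes it below -/
import Mathlib

section
/- Let p and p̄ be Nash-social-welfare-maximizing stochastic matchings before and after removing some subset of agents, with valuations normalized so that u_i(p)=1 for every original agent i. If there is a set N₁ of remaining agents and a constant d ≥ 12 such that every agent i ∈ N₁ has u_i(p̄) ≤ u_i(p)/d, then there exists a set N₂ of remaining agents with |N₂| ≥ d|N₁|/3 such that every k ∈ N₂ has u_k(p̄) ≤ 4 u_k(p)/d. -/
open Finset

/-- A stochastic matching for the set `S` of agents: nonnegative entries, rows of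
agents in `S` sum to `1`, agents outside `S` get nothing, and each item (column)
is allocated a total of at most `1`. -/
def IsStochMatching {n : ℕ} (S : Finset (Fin n)) (p : Matrix (Fin n) (Fin n) ℝ) : Prop :=
  (∀ i j, 0 ≤ p i j) ∧ (∀ i ∈ S, ∑ j, p i j = 1) ∧
  (∀ i ∉ S, ∀ j, p i j = 0) ∧ (∀ j, ∑ i, p i j ≤ 1)

/-- The expected utility of agent `i` under `p` with values `v`. -/
def utility {n : ℕ} (v p : Matrix (Fin n) (Fin n) ℝ) (i : Fin n) : ℝ :=
  ∑ j, v i j * p i j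

/-- `p` maximizes the Nash social welfare over stochastic matchings for agent set `S`. -/
def IsNSWMax {n : ℕ} (v : Matrix (Fin n) (Fin n) ℝ) (S : Finset (Fin n))
    (p : Matrix (Fin n) (Fin n) ℝ) : Prop :=
  IsStochMatching S p ∧
    ∀ q, IsStochMatching S q → ∏ i ∈ S, utility v q i ≤ ∏ i ∈ S, utility v p i

lemma utility_nonneg {n : ℕ} (v q : Matrix (Fin n) (Fin n) ℝ) (hv : ∀ i j, 0 ≤ v i j)
    (hq : ∀ i j, 0 ≤ q i j) (i : Fin n) : 0 ≤ utility v q i :=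
  Finset.sum_nonneg fun j _ => mul_nonneg (hv i j) (hq i j)

lemma foc_pair {n : ℕ} (v : Matrix (Fin n) (Fin n) ℝ) (S : Finset (Fin n))
    (q : Matrix (Fin n) (Fin n) ℝ) (hmax : IsNSWMax v S q)
    (hpos : ∀ m ∈ S, 0 < utility v q m)
    {i k : Fin n} (hi : i ∈ S) (hk : k ∈ S) {j j' : Fin n}
    (hkj : 0 < q k j) (hij' : 0 < q i j') :
    v i j * utility v q k + v k j' * utility v q i ≤
      v k j * utility v q i + v i j' * utility v q k := by
  rcases eq_or_ne i k with rfl | hik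
  · linarith
  rcases eq_or_ne j j' with rfl | hjj'
  · linarith
  set ui := utility v q i with hui
  set uk := utility v q k with huk
  set a := v i j - v i j' with ha
  set b := v k j' - v k j with hb
  suffices h : a * uk + b * ui ≤ 0 by simp only [ha, hb] at h; linarith
  have key : ∀ ε : ℝ, 0 < ε → ε ≤ q k j → ε ≤ q i j' →
      (ui + ε * a) * (uk + ε * b) ≤ ui * uk := by
    intro ε hε hε1 hε2
    set q' : Matrix (Fin n) (Fin n) ℝ := fun x y =>
      q x y + ((if x = i then (1:ℝ) else 0) - (if x = k then 1 else 0)) * ε *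
        ((if y = j then (1:ℝ) else 0) - (if y = j' then 1 else 0)) with hq'
    have hq'def : ∀ x y, q' x y = q x y +
        ((if x = i then (1:ℝ) else 0) - if x = k then 1 else 0) * ε *
          ((if y = j then (1:ℝ) else 0) - if y = j' then 1 else 0) := fun _ _ => rfl
    have hq'entry : ∀ x y, 0 ≤ q' x y := by
      intro x y
      have h0 := hmax.1.1 x y
      rw [hq'def]
      by_cases hxi : x = i <;> by_cases hxk : x = k <;>
        by_cases hyj : y = j <;> by_cases hyj' : y = j' <;>
        simp_all <;> linarith
    have hrow : ∀ x, ∑ y, q' x y = ∑ y, q x y := by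
      intro x
      simp [hq', Finset.sum_add_distrib, mul_sub, Finset.sum_sub_distrib,
        Finset.sum_ite_eq']
    have hcol : ∀ y, ∑ x, q' x y = ∑ x, q x y := by
      intro y
      simp [hq', Finset.sum_add_distrib, sub_mul, Finset.sum_sub_distrib,
        Finset.sum_ite_eq']
    have hstoch' : IsStochMatching S q' := by
      obtain ⟨h1, h2, h3, h4⟩ := hmax.1
      refine ⟨hq'entry, fun x hx => by rw [hrow]; exact h2 x hx, ?_, fun y => by
        rw [hcol]; exact h4 y⟩
      intro x hx y
      have hxi : x ≠ i := fun h => hx (h ▸ hi)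
      have hxk : x ≠ k := fun h => hx (h ▸ hk)
      simp [hq', hxi, hxk, h3 x hx y]
    have hut : ∀ m, utility v q' m = utility v q m +
        ((if m = i then (1:ℝ) else 0) - (if m = k then 1 else 0)) * ε *
          (v m j - v m j') := by
      intro m
      simp only [utility, hq', mul_add, Finset.sum_add_distrib]
      congr 1
      simp [mul_sub, sub_mul, mul_ite, mul_one, mul_zero, Finset.sum_sub_distrib,
        Finset.sum_ite_eq', mul_comm, mul_left_comm]
      by_cases hmi : m = i <;> by_cases hmk : m = k <;> simp [hmi, hmk, hik, hik.symm] <;> ring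
    have hopt := hmax.2 q' hstoch'
    have hki : k ∈ S.erase i := Finset.mem_erase.mpr ⟨Ne.symm hik, hk⟩
    rw [← Finset.mul_prod_erase S (utility v q') hi,
        ← Finset.mul_prod_erase (S.erase i) (utility v q') hki,
        ← Finset.mul_prod_erase S (utility v q) hi,
        ← Finset.mul_prod_erase (S.erase i) (utility v q) hki] at hopt
    have hrest : ∏ m ∈ (S.erase i).erase k, utility v q' m
        = ∏ m ∈ (S.erase i).erase k, utility v q m := by
      refine Finset.prod_congr rfl fun m hm => ?_
      have hmk := (Finset.mem_erase.mp hm).1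
      have hmi := (Finset.mem_erase.mp (Finset.mem_erase.mp hm).2).1
      rw [hut m]; simp [hmi, hmk]
    have hP : 0 < ∏ m ∈ (S.erase i).erase k, utility v q m :=
      Finset.prod_pos fun m hm => hpos m (Finset.mem_of_mem_erase (Finset.mem_of_mem_erase hm))
    rw [hrest] at hopt
    have hui' : utility v q' i = ui + ε * a := by rw [hut i]; simp [hik, ha, hui]; try ring
    have huk' : utility v q' k = uk + ε * b := by rw [hut k]; simp [Ne.symm hik, hb, huk]; try ring
    rw [hui', huk'] at hopt
    rw [← mul_assoc, ← mul_assoc] at hopt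
    exact le_of_mul_le_mul_right hopt hP
  by_contra hcon
  push_neg at hcon
  set δ := a * uk + b * ui with hδ
  have habs : (0:ℝ) < |a * b| + 1 := by positivity
  set ε := min (min (q k j) (q i j')) (δ / (|a * b| + 1)) with hε
  have hεpos : 0 < ε := lt_min (lt_min hkj hij') (div_pos hcon habs)
  have hk1 := key ε hεpos ((min_le_left _ _).trans (min_le_left _ _))
    ((min_le_left _ _).trans (min_le_right _ _))
  have h2 : ε * δ + ε * ε * (a * b) ≤ 0 := by nlinarith [hk1]
  have h3 : δ + ε * (a * b) ≤ 0 := by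
    by_contra h4
    push_neg at h4
    nlinarith [mul_pos hεpos h4]
  have e2 : ε * (|a * b| + 1) ≤ δ := (le_div_iff₀ habs).mp (min_le_right _ _)
  have e3 : -(ε * (a * b)) ≤ ε * |a * b| := by
    have := neg_le_abs (a * b)
    nlinarith [hεpos.le]
  linarith

lemma foc_slack {n : ℕ} (v : Matrix (Fin n) (Fin n) ℝ) (S : Finset (Fin n))
    (q : Matrix (Fin n) (Fin n) ℝ) (hmax : IsNSWMax v S q)
    (hpos : ∀ m ∈ S, 0 < utility v q m)
    {i : Fin n} (hi : i ∈ S) {j j' : Fin n}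
    (hslack : ∑ m, q m j < 1) (hij' : 0 < q i j') :
    v i j ≤ v i j' := by
  rcases eq_or_ne j j' with rfl | hjj'
  · exact le_refl _
  set ε := min (1 - ∑ m, q m j) (q i j') with hε
  have hεpos : 0 < ε := lt_min (by linarith) hij'
  have hε1 : ε ≤ 1 - ∑ m, q m j := min_le_left _ _
  have hε2 : ε ≤ q i j' := min_le_right _ _
  set q' : Matrix (Fin n) (Fin n) ℝ := fun x y =>
    q x y + (if x = i then (1:ℝ) else 0) * ε *
      ((if y = j then (1:ℝ) else 0) - if y = j' then 1 else 0) with hq'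
  have hq'def : ∀ x y, q' x y = q x y + (if x = i then (1:ℝ) else 0) * ε *
      ((if y = j then (1:ℝ) else 0) - if y = j' then 1 else 0) := fun _ _ => rfl
  have hq'entry : ∀ x y, 0 ≤ q' x y := by
    intro x y
    have h0 := hmax.1.1 x y
    rw [hq'def]
    by_cases hxi : x = i <;> by_cases hyj : y = j <;> by_cases hyj' : y = j' <;>
      simp_all <;> linarith [lt_min (sub_pos.mpr hslack) hij']
  have hrow : ∀ x, ∑ y, q' x y = ∑ y, q x y := by
    intro x
    simp [hq', Finset.sum_add_distrib, mul_sub, Finset.sum_sub_distrib,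
      Finset.sum_ite_eq']
  have hcol : ∀ y, ∑ x, q' x y = ∑ x, q x y + ε *
      ((if y = j then (1:ℝ) else 0) - if y = j' then 1 else 0) := by
    intro y
    simp [hq', Finset.sum_add_distrib, ite_mul, Finset.sum_ite_eq', sub_mul]
  have hstoch' : IsStochMatching S q' := by
    obtain ⟨h1, h2, h3, h4⟩ := hmax.1
    refine ⟨hq'entry, fun x hx => by rw [hrow]; exact h2 x hx, ?_, ?_⟩
    · intro x hx y
      have hxi : x ≠ i := fun h => hx (h ▸ hi)
      simp [hq', hxi, h3 x hx y]
    · intro y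
      rw [hcol]
      have h4y := h4 y
      by_cases hyj : y = j
      · subst hyj; simp [hjj']; linarith
      · by_cases hyj' : y = j'
        · subst hyj'; simp [Ne.symm hjj']; linarith
        · simp [hyj, hyj']; linarith
  have hut : ∀ m, utility v q' m = utility v q m +
      (if m = i then (1:ℝ) else 0) * ε * (v m j - v m j') := by
    intro m
    simp only [utility, hq', mul_add, Finset.sum_add_distrib]
    congr 1
    simp [mul_sub, sub_mul, mul_ite, mul_one, mul_zero, Finset.sum_sub_distrib,
      Finset.sum_ite_eq', mul_comm, mul_left_comm]
    try (by_cases hmi : m = i <;> simp [hmi] <;> ring)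
  have hopt := hmax.2 q' hstoch'
  rw [← Finset.mul_prod_erase S (utility v q') hi,
      ← Finset.mul_prod_erase S (utility v q) hi] at hopt
  have hrest : ∏ m ∈ S.erase i, utility v q' m = ∏ m ∈ S.erase i, utility v q m := by
    refine Finset.prod_congr rfl fun m hm => ?_
    have hmi := (Finset.mem_erase.mp hm).1
    rw [hut m]; simp [hmi]
  have hP : 0 < ∏ m ∈ S.erase i, utility v q m :=
    Finset.prod_pos fun m hm => hpos m (Finset.mem_of_mem_erase hm)
  rw [hrest] at hopt
  have hui' : utility v q' i = utility v q i + ε * (v i j - v i j') := by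
    rw [hut i]; simp
  rw [hui'] at hopt
  have := le_of_mul_le_mul_right hopt hP
  nlinarith

lemma avg_exchange {n : ℕ} (v : Matrix (Fin n) (Fin n) ℝ) (hv : ∀ i j, 0 ≤ v i j)
    (S : Finset (Fin n)) (q : Matrix (Fin n) (Fin n) ℝ) (hmax : IsNSWMax v S q)
    (hpos : ∀ m ∈ S, 0 < utility v q m)
    {i k : Fin n} (hi : i ∈ S) (hk : k ∈ S) {j : Fin n} (hkj : 0 < q k j) :
    v i j * utility v q k ≤ (v k j + utility v q k) * utility v q i := by
  have hrow : ∑ j', q i j' = 1 := hmax.1.2.1 i hi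
  have key : ∀ j', q i j' * (v i j * utility v q k + v k j' * utility v q i)
      ≤ q i j' * (v k j * utility v q i + v i j' * utility v q k) := by
    intro j'
    rcases (hmax.1.1 i j').eq_or_lt with h | h
    · rw [← h]; simp
    · exact mul_le_mul_of_nonneg_left (foc_pair v S q hmax hpos hi hk hkj h) h.le
  have hsum := Finset.sum_le_sum (fun j' (_ : j' ∈ Finset.univ) => key j')
  have expand : ∀ (C : ℝ) (w : Fin n → ℝ),
      ∑ j', q i j' * (C + w j') = C + ∑ j', q i j' * w j' := by
    intro C w
    simp [mul_add, Finset.sum_add_distrib, ← Finset.sum_mul, hrow]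
  have e1 : ∑ j', q i j' * (v i j * utility v q k + v k j' * utility v q i)
      = v i j * utility v q k + (∑ j', q i j' * v k j') * utility v q i := by
    rw [expand, Finset.sum_mul]
    simp [mul_assoc]
  have e2 : ∑ j', q i j' * (v k j * utility v q i + v i j' * utility v q k)
      = v k j * utility v q i + utility v q i * utility v q k := by
    have hu : ∑ j', q i j' * v i j' = utility v q i := by
      simp [utility, mul_comm]
    rw [expand, ← hu, Finset.sum_mul]
    simp [mul_assoc]
  rw [e1, e2] at hsum
  have hX : 0 ≤ ∑ j', q i j' * v k j' :=
    Finset.sum_nonneg fun j' _ => mul_nonneg (hmax.1.1 i j') (hv k j')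
  have hui : 0 ≤ utility v q i := utility_nonneg v q hv hmax.1.1 i
  nlinarith [mul_nonneg hX hui]

lemma avg_slack {n : ℕ} (v : Matrix (Fin n) (Fin n) ℝ) (hv : ∀ i j, 0 ≤ v i j)
    (S : Finset (Fin n)) (q : Matrix (Fin n) (Fin n) ℝ) (hmax : IsNSWMax v S q)
    (hpos : ∀ m ∈ S, 0 < utility v q m)
    {i : Fin n} (hi : i ∈ S) {j : Fin n} (hslack : ∑ m, q m j < 1) :
    v i j ≤ utility v q i := by
  have hrow : ∑ j', q i j' = 1 := hmax.1.2.1 i hi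
  have key : ∀ j', q i j' * v i j ≤ q i j' * v i j' := by
    intro j'
    rcases (hmax.1.1 i j').eq_or_lt with h | h
    · rw [← h]; simp
    · exact mul_le_mul_of_nonneg_left (foc_slack v S q hmax hpos hi hslack h) h.le
  have hsum := Finset.sum_le_sum (fun j' (_ : j' ∈ Finset.univ) => key j')
  rw [← Finset.sum_mul, hrow, one_mul] at hsum
  calc v i j ≤ ∑ j', q i j' * v i j' := hsum
    _ = utility v q i := by simp [utility, mul_comm]

/-- Amplification lemma: if `p` and `p̄` are the NSW maximizers before and after the
removal of some agents (utilities normalized so `u_i(p) = 1` for all `i`), and every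
agent in `N₁ ⊆ N'` loses a factor `d ≥ 12` of her utility, then at least `d|N₁|/3`
remaining agents lose a factor `d/4`. -/
theorem nsw_ratio_change {n : ℕ} (v p pbar : Matrix (Fin n) (Fin n) ℝ)
    (hv : ∀ i j, 0 ≤ v i j)
    (N' : Finset (Fin n)) (N₁ : Finset (Fin n)) (hN₁ : N₁ ⊆ N')
    (hp : IsNSWMax v Finset.univ p)
    (hpbar : IsNSWMax v N' pbar)
    (hnorm : ∀ i, utility v p i = 1)
    (d : ℝ) (hd : 12 ≤ d)
    (hloss : ∀ i ∈ N₁, utility v pbar i ≤ utility v p i / d) :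
    ∃ N₂ : Finset (Fin n), N₂ ⊆ N' ∧ d * N₁.card / 3 ≤ N₂.card ∧
      ∀ k ∈ N₂, utility v pbar k ≤ 4 * utility v p k / d := by
  have hd0 : (0:ℝ) < d := by linarith
  have hpnn : ∀ i j, 0 ≤ p i j := hp.1.1
  have hprow : ∀ i, ∑ j, p i j = 1 := fun i => hp.1.2.1 i (Finset.mem_univ i)
  have hpcol : ∀ j, ∑ i, p i j ≤ 1 := hp.1.2.2.2
  have hbnn : ∀ i j, 0 ≤ pbar i j := hpbar.1.1
  have hbzero : ∀ i ∉ N', ∀ j, pbar i j = 0 := hpbar.1.2.2.1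
  have hbcol : ∀ j, ∑ i, pbar i j ≤ 1 := hpbar.1.2.2.2
  -- positivity of pbar utilities on N'
  have hpos : ∀ k ∈ N', 0 < utility v pbar k := by
    have hstoch : IsStochMatching N'
        (fun a b => if a ∈ N' then p a b else 0) := by
      refine ⟨fun a b => ?_, fun a ha => ?_, fun a ha b => ?_, fun b => ?_⟩
      · dsimp only; split
        · exact hpnn a b
        · exact le_refl 0
      · simp [ha, hprow a]
      · simp [ha]
      · refine le_trans (Finset.sum_le_sum fun a _ => ?_) (hpcol b)
        dsimp only; split
        · exact le_refl _
        · exact hpnn a b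
    have hprodq : (1:ℝ) ≤ ∏ m ∈ N', utility v (fun a b => if a ∈ N' then p a b else 0) m := by
      have he : ∀ m ∈ N', utility v (fun a b => if a ∈ N' then p a b else 0) m = 1 := by
        intro m hm
        have : utility v (fun a b => if a ∈ N' then p a b else 0) m = utility v p m := by
          simp [utility, hm]
        rw [this, hnorm m]
      rw [Finset.prod_congr rfl he]
      simp
    have hprod := le_trans hprodq (hpbar.2 _ hstoch)
    intro k hk
    rcases (utility_nonneg v pbar hv hbnn k).eq_or_lt with h | h
    · exfalso
      rw [Finset.prod_eq_zero hk h.symm] at hprod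
      linarith
    · exact h
  have hupos : ∀ m ∈ (Finset.univ : Finset (Fin n)), 0 < utility v p m := by
    intro m _; rw [hnorm m]; norm_num
  -- FOC-based bounds
  have EXP : ∀ i k j, 0 < p i j → v k j ≤ v i j + 1 := by
    intro i k j hpij
    have := avg_exchange v hv Finset.univ p hp hupos (Finset.mem_univ k)
      (Finset.mem_univ i) hpij
    rw [hnorm i, hnorm k] at this
    linarith
  have hTuniv : ∀ j, ∑ k ∈ N', pbar k j = ∑ m, pbar m j := by
    intro j
    exact Finset.sum_subset (Finset.subset_univ N') (fun x _ hx => hbzero x hx j)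
  have hT1 : ∀ j, ∑ k ∈ N', pbar k j ≤ 1 := fun j => (hTuniv j) ▸ hbcol j
  -- claim1 : pointwise upper bound on v i j
  have claim1 : ∀ i ∈ N', ∀ j, v i j ≤ utility v pbar i *
      ((∑ k ∈ N', (utility v pbar k)⁻¹ * (pbar k j * v k j)) + 1) := by
    intro i hiN j
    have h1 : ∀ k ∈ N', v i j * pbar k j ≤ utility v pbar i *
        ((utility v pbar k)⁻¹ * (pbar k j * v k j) + pbar k j) := by
      intro k hkN
      rcases (hbnn k j).eq_or_lt with h | h
      · rw [← h]; simp
      · have huk := hpos k hkN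
        have h2 := avg_exchange v hv N' pbar hpbar hpos hiN hkN h
        have h3 : v i j ≤ utility v pbar i * ((utility v pbar k)⁻¹ * v k j + 1) := by
          have h5 : v i j = (v i j * utility v pbar k) * (utility v pbar k)⁻¹ := by
            field_simp
          have h6 : utility v pbar i * ((utility v pbar k)⁻¹ * v k j + 1)
              = ((v k j + utility v pbar k) * utility v pbar i) * (utility v pbar k)⁻¹ := by
            field_simp
          rw [h5, h6]
          exact mul_le_mul_of_nonneg_right h2 (inv_nonneg.mpr huk.le)
        calc v i j * pbar k j
            ≤ (utility v pbar i * ((utility v pbar k)⁻¹ * v k j + 1)) * pbar k j :=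
              mul_le_mul_of_nonneg_right h3 (hbnn k j)
          _ = utility v pbar i * ((utility v pbar k)⁻¹ * (pbar k j * v k j) + pbar k j) := by
              ring
    have hsum1 : v i j * (∑ k ∈ N', pbar k j) ≤ utility v pbar i *
        ((∑ k ∈ N', (utility v pbar k)⁻¹ * (pbar k j * v k j)) + ∑ k ∈ N', pbar k j) := by
      calc v i j * (∑ k ∈ N', pbar k j)
          = ∑ k ∈ N', v i j * pbar k j := Finset.mul_sum _ _ _
        _ ≤ ∑ k ∈ N', utility v pbar i *
            ((utility v pbar k)⁻¹ * (pbar k j * v k j) + pbar k j) :=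
          Finset.sum_le_sum h1
        _ = utility v pbar i * ((∑ k ∈ N', (utility v pbar k)⁻¹ * (pbar k j * v k j))
            + ∑ k ∈ N', pbar k j) := by
          rw [← Finset.mul_sum, Finset.sum_add_distrib]
    have hsum2 : v i j * (1 - ∑ k ∈ N', pbar k j) ≤ utility v pbar i *
        (1 - ∑ k ∈ N', pbar k j) := by
      rcases (hT1 j).eq_or_lt with h | h
      · rw [h]; simp
      · have hsl : v i j ≤ utility v pbar i := by
          refine avg_slack v hv N' pbar hpbar hpos hiN ?_
          rw [← hTuniv j]; exact h
        have : (0:ℝ) ≤ 1 - ∑ k ∈ N', pbar k j := by linarith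
        exact mul_le_mul_of_nonneg_right hsl this
    nlinarith [hsum1, hsum2]
  -- per-agent lower bound on the weight sum
  have key_i : ∀ i ∈ N₁, d - 1 ≤ ∑ j, p i j *
      (∑ k ∈ N', (utility v pbar k)⁻¹ * (pbar k j * v k j)) := by
    intro i hi
    have hiN' := hN₁ hi
    have hw : ∀ j, 0 ≤ ∑ k ∈ N', (utility v pbar k)⁻¹ * (pbar k j * v k j) := by
      intro j
      refine Finset.sum_nonneg fun k hk => ?_
      exact mul_nonneg (inv_nonneg.mpr (hpos k hk).le) (mul_nonneg (hbnn k j) (hv k j))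
    have h2 : ∑ j, v i j * p i j ≤ ∑ j, (utility v pbar i *
        ((∑ k ∈ N', (utility v pbar k)⁻¹ * (pbar k j * v k j)) + 1)) * p i j :=
      Finset.sum_le_sum fun j _ => mul_le_mul_of_nonneg_right (claim1 i hiN' j) (hpnn i j)
    have h3 : ∑ j, (utility v pbar i *
        ((∑ k ∈ N', (utility v pbar k)⁻¹ * (pbar k j * v k j)) + 1)) * p i j
        = utility v pbar i * ((∑ j, p i j *
          (∑ k ∈ N', (utility v pbar k)⁻¹ * (pbar k j * v k j))) + 1) := by
      simp only [mul_assoc, ← Finset.mul_sum]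
      congr 1
      simp only [add_mul, one_mul, Finset.sum_add_distrib, hprow i]
      congr 1
      exact Finset.sum_congr rfl fun j _ => mul_comm _ _
    have h1 : (1:ℝ) = ∑ j, v i j * p i j := (hnorm i).symm
    have hA : 0 ≤ ∑ j, p i j *
        (∑ k ∈ N', (utility v pbar k)⁻¹ * (pbar k j * v k j)) :=
      Finset.sum_nonneg fun j _ => mul_nonneg (hpnn i j) (hw j)
    have hui : utility v pbar i ≤ 1 / d := by
      have := hloss i hi
      rwa [hnorm i] at this
    have hfin : (1:ℝ) ≤ (1/d) * ((∑ j, p i j *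
        (∑ k ∈ N', (utility v pbar k)⁻¹ * (pbar k j * v k j))) + 1) := by
      calc (1:ℝ) = ∑ j, v i j * p i j := h1
        _ ≤ _ := h2
        _ = utility v pbar i * ((∑ j, p i j *
            (∑ k ∈ N', (utility v pbar k)⁻¹ * (pbar k j * v k j))) + 1) := h3
        _ ≤ (1/d) * ((∑ j, p i j *
            (∑ k ∈ N', (utility v pbar k)⁻¹ * (pbar k j * v k j))) + 1) :=
          mul_le_mul_of_nonneg_right hui (by linarith)
    rw [div_mul_eq_mul_div, le_div_iff₀ hd0, one_mul] at hfin
    linarith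
  -- total lower bound
  have hkey : (d - 1) * N₁.card ≤ ∑ i ∈ N₁, ∑ j, p i j *
      (∑ k ∈ N', (utility v pbar k)⁻¹ * (pbar k j * v k j)) := by
    calc (d - 1) * N₁.card = ∑ _i ∈ N₁, (d - 1) := by
          rw [Finset.sum_const, nsmul_eq_mul, mul_comm]
      _ ≤ _ := Finset.sum_le_sum key_i
  -- swap the sum to agent-k form
  have hswap : ∑ i ∈ N₁, ∑ j, p i j *
      (∑ k ∈ N', (utility v pbar k)⁻¹ * (pbar k j * v k j))
      = ∑ k ∈ N', (utility v pbar k)⁻¹ *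
        (∑ j, (∑ i ∈ N₁, p i j) * (pbar k j * v k j)) := by
    have e1 : ∀ i, ∑ j, p i j * (∑ k ∈ N', (utility v pbar k)⁻¹ * (pbar k j * v k j))
        = ∑ k ∈ N', ∑ j, p i j * ((utility v pbar k)⁻¹ * (pbar k j * v k j)) := by
      intro i
      rw [Finset.sum_comm]
      exact Finset.sum_congr rfl fun j _ => Finset.mul_sum _ _ _
    have e2 : ∀ k, (utility v pbar k)⁻¹ * (∑ j, (∑ i ∈ N₁, p i j) * (pbar k j * v k j))
        = ∑ i ∈ N₁, ∑ j, p i j * ((utility v pbar k)⁻¹ * (pbar k j * v k j)) := by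
      intro k
      rw [Finset.sum_comm]
      rw [Finset.mul_sum]
      refine Finset.sum_congr rfl fun j _ => ?_
      rw [Finset.sum_mul, Finset.mul_sum]
      exact Finset.sum_congr rfl fun i _ => by ring
    simp only [e1, e2]
    exact Finset.sum_comm
  -- bounds on B k
  have hcolN₁ : ∀ j, ∑ i ∈ N₁, p i j ≤ 1 := by
    intro j
    refine le_trans ?_ (hpcol j)
    exact Finset.sum_le_sum_of_subset_of_nonneg (Finset.subset_univ N₁)
      (fun x _ _ => hpnn x j)
  have hcolN₁0 : ∀ j, 0 ≤ ∑ i ∈ N₁, p i j :=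
    fun j => Finset.sum_nonneg fun i _ => hpnn i j
  have hB0 : ∀ k, 0 ≤ ∑ j, (∑ i ∈ N₁, p i j) * (pbar k j * v k j) := by
    intro k
    exact Finset.sum_nonneg fun j _ => mul_nonneg (hcolN₁0 j)
      (mul_nonneg (hbnn k j) (hv k j))
  have hB1 : ∀ k ∈ N', ∑ j, (∑ i ∈ N₁, p i j) * (pbar k j * v k j)
      ≤ utility v pbar k := by
    intro k hk
    calc ∑ j, (∑ i ∈ N₁, p i j) * (pbar k j * v k j)
        ≤ ∑ j, 1 * (pbar k j * v k j) := Finset.sum_le_sum fun j _ =>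
          mul_le_mul_of_nonneg_right (hcolN₁ j) (mul_nonneg (hbnn k j) (hv k j))
      _ = utility v pbar k := by
          simp only [one_mul, utility]
          exact Finset.sum_congr rfl fun j _ => by ring
  have hBsum : ∑ k ∈ N', ∑ j, (∑ i ∈ N₁, p i j) * (pbar k j * v k j)
      ≤ 2 * N₁.card := by
    have e : ∑ k ∈ N', ∑ j, (∑ i ∈ N₁, p i j) * (pbar k j * v k j)
        = ∑ i ∈ N₁, ∑ j, p i j * (∑ k ∈ N', pbar k j * v k j) := by
      rw [Finset.sum_comm]
      conv_rhs => rw [Finset.sum_comm]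
      refine Finset.sum_congr rfl fun j _ => ?_
      rw [← Finset.mul_sum, ← Finset.sum_mul]
    rw [e]
    have hper : ∀ i ∈ N₁, ∑ j, p i j * (∑ k ∈ N', pbar k j * v k j)
        ≤ ∑ j, p i j * (v i j + 1) := by
      intro i _
      refine Finset.sum_le_sum fun j _ => ?_
      rcases (hpnn i j).eq_or_lt with h | h
      · rw [← h]; simp
      · refine mul_le_mul_of_nonneg_left ?_ h.le
        calc ∑ k ∈ N', pbar k j * v k j
            ≤ ∑ k ∈ N', pbar k j * (v i j + 1) := Finset.sum_le_sum fun k _ =>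
              mul_le_mul_of_nonneg_left (EXP i k j h) (hbnn k j)
          _ = (∑ k ∈ N', pbar k j) * (v i j + 1) := (Finset.sum_mul _ _ _).symm
          _ ≤ 1 * (v i j + 1) := mul_le_mul_of_nonneg_right (hT1 j)
              (by have := hv i j; linarith)
          _ = v i j + 1 := one_mul _
    calc ∑ i ∈ N₁, ∑ j, p i j * (∑ k ∈ N', pbar k j * v k j)
        ≤ ∑ i ∈ N₁, ∑ j, p i j * (v i j + 1) := Finset.sum_le_sum hper
      _ = ∑ _i ∈ N₁, (2:ℝ) := by
          refine Finset.sum_congr rfl fun i _ => ?_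
          have : ∑ j, p i j * (v i j + 1) = (∑ j, v i j * p i j) + ∑ j, p i j := by
            rw [← Finset.sum_add_distrib]
            exact Finset.sum_congr rfl fun j _ => by ring
          rw [this, hprow i]
          have := hnorm i
          rw [utility] at this
          rw [this]; norm_num
      _ = 2 * N₁.card := by rw [Finset.sum_const, nsmul_eq_mul, mul_comm]
  -- define N₂ and split
  refine ⟨N'.filter (fun k => utility v pbar k ≤ 4 * utility v p k / d),
    Finset.filter_subset _ _, ?_, fun k hk => (Finset.mem_filter.mp hk).2⟩
  have hsplit := Finset.sum_filter_add_sum_filter_not N'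
    (fun k => utility v pbar k ≤ 4 * utility v p k / d)
    (fun k => (utility v pbar k)⁻¹ * (∑ j, (∑ i ∈ N₁, p i j) * (pbar k j * v k j)))
  have bound1 : ∑ k ∈ N'.filter (fun k => utility v pbar k ≤ 4 * utility v p k / d),
      (utility v pbar k)⁻¹ * (∑ j, (∑ i ∈ N₁, p i j) * (pbar k j * v k j))
      ≤ (N'.filter (fun k => utility v pbar k ≤ 4 * utility v p k / d)).card := by
    calc _ ≤ ∑ _k ∈ N'.filter (fun k => utility v pbar k ≤ 4 * utility v p k / d),
        (1:ℝ) := by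
          refine Finset.sum_le_sum fun k hk => ?_
          have hkN : k ∈ N' := Finset.mem_of_mem_filter k hk
          have huk := hpos k hkN
          calc (utility v pbar k)⁻¹ * (∑ j, (∑ i ∈ N₁, p i j) * (pbar k j * v k j))
              ≤ (utility v pbar k)⁻¹ * utility v pbar k :=
                mul_le_mul_of_nonneg_left (hB1 k hkN) (inv_nonneg.mpr huk.le)
            _ = 1 := inv_mul_cancel₀ huk.ne'
      _ = _ := by rw [Finset.sum_const, nsmul_eq_mul, mul_one]
  have bound2 : ∑ k ∈ N'.filter (fun k => ¬ utility v pbar k ≤ 4 * utility v p k / d),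
      (utility v pbar k)⁻¹ * (∑ j, (∑ i ∈ N₁, p i j) * (pbar k j * v k j))
      ≤ (d / 4) * (2 * N₁.card) := by
    calc ∑ k ∈ N'.filter (fun k => ¬ utility v pbar k ≤ 4 * utility v p k / d),
        (utility v pbar k)⁻¹ * (∑ j, (∑ i ∈ N₁, p i j) * (pbar k j * v k j))
        ≤ ∑ k ∈ N'.filter (fun k => ¬ utility v pbar k ≤ 4 * utility v p k / d),
          (d / 4) * (∑ j, (∑ i ∈ N₁, p i j) * (pbar k j * v k j)) := by
          refine Finset.sum_le_sum fun k hk => ?_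
          have hkN : k ∈ N' := Finset.mem_of_mem_filter k hk
          have hgt : 4 * utility v p k / d < utility v pbar k := by
            have := (Finset.mem_filter.mp hk).2
            exact lt_of_not_ge this
          rw [hnorm k] at hgt
          have h4d : (0:ℝ) < 4 * 1 / d := by positivity
          have hinvle : (utility v pbar k)⁻¹ ≤ (4 * 1 / d)⁻¹ := by
            apply inv_anti₀ h4d hgt.le
          have : (4 * 1 / d)⁻¹ = d / 4 := by field_simp
          rw [this] at hinvle
          exact mul_le_mul_of_nonneg_right hinvle (hB0 k)
      _ = (d / 4) * ∑ k ∈ N'.filter (fun k => ¬ utility v pbar k ≤ 4 * utility v p k / d),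
          (∑ j, (∑ i ∈ N₁, p i j) * (pbar k j * v k j)) := (Finset.mul_sum _ _ _).symm
      _ ≤ (d / 4) * (2 * N₁.card) := by
          refine mul_le_mul_of_nonneg_left ?_ (by positivity)
          refine le_trans ?_ hBsum
          exact Finset.sum_le_sum_of_subset_of_nonneg (Finset.filter_subset _ _)
            (fun k _ _ => hB0 k)
  have htotal : (d - 1) * N₁.card ≤
      (N'.filter (fun k => utility v pbar k ≤ 4 * utility v p k / d)).card
      + (d / 4) * (2 * N₁.card) := by
    rw [hswap] at hkey
    rw [← hsplit] at hkey
    linarith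
  have hc1 : (0:ℝ) ≤ (N₁.card : ℝ) := Nat.cast_nonneg _
  nlinarith [htotal, hc1, hd]
end

section
/- If for each α ≥ 1, applying the amplification lemma α times to a single agent losing a factor ρ yields at least (ρ/3)^α · (1/4)^{α(α−1)/2} agents each with final utility at most 4^α/ρ, and ρ ≥ 4^{√(log n)+1}, then choosing α = √(log n) gives (ρ/3)^α · (1/4)^{α(α−1)/2} ≥ n and 4^α/ρ ≤ 1/4. -/
/-- The arithmetic at the heart of the upper bound on utility non-monotonicity: with
`α = √(log₂ n)` and `ρ ≥ 4^(√(log₂ n)+1)`, applying the amplification lemma `α` times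
yields at least `(ρ/3)^α · (1/4)^(α(α−1)/2) ≥ n` agents, each with final utility at
most `4^α/ρ ≤ 1/4`. -/
theorem amplification_arithmetic (n : ℕ) (hn : 2 ≤ n) (ρ : ℝ) (hρ : 0 < ρ)
    (hbig : (4 : ℝ) ^ (Real.sqrt (Real.logb 2 n) + 1) ≤ ρ) :
    (n : ℝ) ≤ (ρ / 3) ^ Real.sqrt (Real.logb 2 n) *
        ((1 : ℝ) / 4) ^ (Real.sqrt (Real.logb 2 n) * (Real.sqrt (Real.logb 2 n) - 1) / 2) ∧
      (4 : ℝ) ^ Real.sqrt (Real.logb 2 n) / ρ ≤ 1 / 4 := by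
  set α := Real.sqrt (Real.logb 2 n) with hα
  have hn2 : (2:ℝ) ≤ (n:ℝ) := by exact_mod_cast hn
  have hnpos : (0:ℝ) < n := by linarith
  have hlog1 : (1:ℝ) ≤ Real.logb 2 n := by
    have h := Real.logb_le_logb_of_le (b := 2) one_lt_two (by norm_num) hn2
    rwa [Real.logb_self_eq_one one_lt_two] at h
  have hlog0 : (0:ℝ) ≤ Real.logb 2 n := by linarith
  have hα1 : 1 ≤ α := by
    rw [hα, show (1:ℝ) = Real.sqrt 1 by simp]
    exact Real.sqrt_le_sqrt hlog1
  have hα0 : 0 ≤ α := by linarith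
  have hαsq : α * α = Real.logb 2 n := Real.mul_self_sqrt hlog0
  have h4pow : (4:ℝ) ^ (α + 1) = (4:ℝ) ^ α * 4 := by
    rw [Real.rpow_add (by norm_num), Real.rpow_one]
  have h4α_pos : (0:ℝ) < (4:ℝ) ^ α := Real.rpow_pos_of_pos (by norm_num) α
  constructor
  · -- main inequality
    have h1 : (4:ℝ) ^ α ≤ ρ / 3 := by
      have : (4:ℝ) ^ α * 4 ≤ ρ := by rw [← h4pow]; exact hbig
      nlinarith
    have h2 : ((4:ℝ) ^ α) ^ α ≤ (ρ / 3) ^ α :=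
      Real.rpow_le_rpow (le_of_lt h4α_pos) h1 hα0
    have h3 : ((4:ℝ) ^ α) ^ α = (4:ℝ) ^ (α * α) :=
      (Real.rpow_mul (by norm_num) α α).symm
    have hq : ((1:ℝ)/4) ^ (α * (α - 1) / 2) = (4:ℝ) ^ (-(α * (α - 1) / 2)) := by
      rw [one_div, Real.inv_rpow (by norm_num), ← Real.rpow_neg (by norm_num)]
    have hqpos : (0:ℝ) < ((1:ℝ)/4) ^ (α * (α - 1) / 2) :=
      Real.rpow_pos_of_pos (by norm_num) _
    have key : (4:ℝ) ^ (α * α) * ((1:ℝ)/4) ^ (α * (α - 1) / 2)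
        = (4:ℝ) ^ (α * α - α * (α - 1) / 2) := by
      rw [hq, ← Real.rpow_add (by norm_num)]
      ring_nf
    have hexp : (4:ℝ) ^ (α * α - α * (α - 1) / 2) = (2:ℝ) ^ (α * α + α) := by
      have h24 : (2:ℝ) ^ (2:ℝ) = 4 := by
        rw [show (2:ℝ) = ((2:ℕ):ℝ) by norm_num, Real.rpow_natCast]; norm_num
      rw [← h24, ← Real.rpow_mul (by norm_num)]
      ring_nf
    have hmono : (2:ℝ) ^ (α * α) ≤ (2:ℝ) ^ (α * α + α) :=
      Real.rpow_le_rpow_of_exponent_le one_le_two (by linarith)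
    have hnval : (n:ℝ) = (2:ℝ) ^ (α * α) := by
      rw [hαsq, Real.rpow_logb (by norm_num) (by norm_num) hnpos]
    calc (n:ℝ) = (2:ℝ) ^ (α * α) := hnval
      _ ≤ (2:ℝ) ^ (α * α + α) := hmono
      _ = (4:ℝ) ^ (α * α) * ((1:ℝ)/4) ^ (α * (α - 1) / 2) := by rw [key, hexp]
      _ = ((4:ℝ) ^ α) ^ α * ((1:ℝ)/4) ^ (α * (α - 1) / 2) := by rw [h3]
      _ ≤ (ρ / 3) ^ α * ((1:ℝ)/4) ^ (α * (α - 1) / 2) := by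
          exact mul_le_mul_of_nonneg_right h2 (le_of_lt hqpos)
  · -- second inequality
    rw [div_le_div_iff₀ hρ (by norm_num)]
    have : (4:ℝ) ^ α * 4 ≤ ρ := by rw [← h4pow]; exact hbig
    linarith
end

section
/- In the three-agent, three-item instance with values v_{a,A}=1, v_{a,B}=2, v_{b,B}=2, v_{b,C}=1, v_{c,C}=1 (all other values 0), the Nash-social-welfare-maximizing doubly stochastic matrix assigns agent a to item A, agent b to item B, and agent c to item C, each with probability 1. -/
/-- Doubly stochastic `n × n` matrix. -/
def IsDoublyStochastic {n : ℕ} (p : Matrix (Fin n) (Fin n) ℝ) : Prop :=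
  (∀ i j, 0 ≤ p i j) ∧ (∀ i, ∑ j, p i j = 1) ∧ (∀ j, ∑ i, p i j = 1)

/-- Values of the three-agent instance: `v_{a,A}=1, v_{a,B}=2, v_{b,B}=2, v_{b,C}=1,
v_{c,C}=1`, all other values `0` (agents `a,b,c` and items `A,B,C` are indexed `0,1,2`). -/
def vABC : Matrix (Fin 3) (Fin 3) ℝ :=
  !![1, 2, 0; 0, 2, 1; 0, 0, 1]

lemma amgm3 (x y z : ℝ) (hx : 0 ≤ x) (hy : 0 ≤ y) (hz : 0 ≤ z)
    (h : x + y + z ≤ 3) : x * y * z ≤ 1 := by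
  nlinarith [sq_nonneg (x - y), sq_nonneg (y - z), sq_nonneg (x - z),
    mul_nonneg hx hy, mul_nonneg hy hz, mul_nonneg hx hz,
    mul_nonneg (mul_nonneg hx hy) hz, sq_nonneg (x + y + z - 3),
    mul_nonneg (mul_nonneg hx hx) hy, sq_nonneg (x + y - 2 * z),
    mul_nonneg hz (sq_nonneg (x - y)), mul_nonneg hx (sq_nonneg (y - z)),
    mul_nonneg hy (sq_nonneg (x - z))]

/-- In this instance, the assignment giving `a → A`, `b → B`, `c → C` each with
probability `1` (the identity matrix) maximizes Nash social welfare over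
doubly stochastic matrices. -/
theorem nsw_max_three_agent_example (p : Matrix (Fin 3) (Fin 3) ℝ)
    (hp : p = fun i j => if i = j then (1 : ℝ) else 0) :
    IsDoublyStochastic p ∧
      ∀ q : Matrix (Fin 3) (Fin 3) ℝ, IsDoublyStochastic q →
        ∏ i, utility vABC q i ≤ ∏ i, utility vABC p i := by
  subst hp
  constructor
  · refine ⟨?_, ?_, ?_⟩
    · intro i j; dsimp only; split <;> norm_num
    · intro i; fin_cases i <;> simp [Fin.sum_univ_three]
    · intro j; fin_cases j <;> simp [Fin.sum_univ_three]
  · intro q ⟨hnn, hrow, hcol⟩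
    have hprod : ∏ i, utility vABC (fun i j => if i = j then (1 : ℝ) else 0) i = 2 := by
      norm_num [utility, vABC, Fin.prod_univ_three, Fin.sum_univ_three, Matrix.vecHead, Matrix.vecTail, Matrix.cons_val_two, Matrix.tail_cons, Matrix.head_cons]
    rw [hprod]
    have hq : ∏ i, utility vABC q i
        = 2 * ((q 0 0 + 2 * q 0 1) * (q 1 1 + q 1 2 / 2) * q 2 2) := by
      simp only [utility, Fin.prod_univ_three, Fin.sum_univ_three]
      norm_num [vABC, Matrix.vecHead, Matrix.vecTail, Matrix.cons_val_two, Matrix.tail_cons, Matrix.head_cons]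
      ring
    rw [hq]
    have hxn : 0 ≤ q 0 0 + 2 * q 0 1 := by have := hnn 0 0; have := hnn 0 1; positivity
    have hyn : 0 ≤ q 1 1 + q 1 2 / 2 := by have := hnn 1 1; have := hnn 1 2; positivity
    have hzn : 0 ≤ q 2 2 := hnn 2 2
    have hsum : (q 0 0 + 2 * q 0 1) + (q 1 1 + q 1 2 / 2) + q 2 2 ≤ 3 := by
      have hr0 := hrow 0
      have hc1 := hcol 1
      have hc2 := hcol 2
      simp [Fin.sum_univ_three] at hr0 hc1 hc2
      have h1 := hnn 0 2
      have h2 := hnn 2 1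
      have h3 := hnn 1 2
      linarith
    have key := amgm3 _ _ _ hxn hyn hzn hsum
    linarith
end
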